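/- Let K be a field. The polynomial f(x,y,z) = x + (xz − zy) is not a z-coordinate of K⟨x,y,z⟩: there is no z-automorphism φ of K⟨x,y,z⟩ with φ(x) = x + xz − zy. -/

import Mathlib

open MonoidAlgebra

noncomputable section

/-- The free associative algebra `K⟨x,y,z⟩`, realized as the monoid algebra of the
free monoid on three letters. -/
abbrev FA (K : Type) [Field K] := MonoidAlgebra K (FreeMonoid (Fin 3))

variable (K : Type) [Field K]

/-- The generators `x = Xv 0`, `y = Xv 1`, `z = Xv 2`. -/
def Xv (i : Fin 3) : FA K := MonoidAlgebra.of K (FreeMonoid (Fin 3)) (FreeMonoid.of i)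

/-- Scalar algebra homomorphism determined by values on generators. -/
def Sc (u : Fin 3 → K) : FA K →ₐ[K] K :=
  MonoidAlgebra.lift K K (FreeMonoid (Fin 3)) (FreeMonoid.lift u)

/-- Triangular matrix representation: generator `i ↦ !![u i, c i; 0, v i]`.
Its `(0,1)` entry is a "Fox-derivative-like" `(Sc u, Sc v)`-derivation. -/
def W (u v c : Fin 3 → K) : FA K →ₐ[K] Matrix (Fin 2) (Fin 2) K :=
  MonoidAlgebra.lift K _ (FreeMonoid (Fin 3))
    (FreeMonoid.lift fun i => !![u i, c i; 0, v i])

lemma Sc_Xv (u : Fin 3 → K) (i : Fin 3) : Sc K u (Xv K i) = u i := by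
  simp [Sc, Xv, MonoidAlgebra.lift_of]

lemma W_Xv (u v c : Fin 3 → K) (i : Fin 3) :
    W K u v c (Xv K i) = !![u i, c i; 0, v i] := by
  simp [W, Xv, MonoidAlgebra.lift_of]

lemma of_of (i : Fin 3) :
    (MonoidAlgebra.of K (FreeMonoid (Fin 3))) (FreeMonoid.of i) = Xv K i := rfl

/-- `W u v c` is upper triangular with diagonal `(Sc u, Sc v)`. -/
lemma W_tri (u v c : Fin 3 → K) (h : FA K) :
    W K u v c h 1 0 = 0 ∧ W K u v c h 0 0 = Sc K u h ∧ W K u v c h 1 1 = Sc K v h := by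
  induction h using MonoidAlgebra.induction_on with
  | of g =>
    induction g using FreeMonoid.inductionOn' with
    | one =>
      rw [map_one]
      simp [Matrix.one_apply]
    | of_mul i t iht =>
      obtain ⟨h10, h00, h11⟩ := iht
      rw [map_mul, of_of, map_mul, map_mul, map_mul, W_Xv]
      generalize (MonoidAlgebra.of K (FreeMonoid (Fin 3))) t = h at h10 h00 h11 ⊢
      refine ⟨?_, ?_, ?_⟩ <;>
        · rw [Matrix.mul_apply, Fin.sum_univ_two]
          simp [h10, h00, h11, Sc_Xv]
  | add f g hf hg =>
    obtain ⟨a1, a2, a3⟩ := hf; obtain ⟨b1, b2, b3⟩ := hg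
    simp [a1, a2, a3, b1, b2, b3]
  | smul r f hf =>
    obtain ⟨a1, a2, a3⟩ := hf
    simp [a1, a2, a3]

/-- The product rule for the `(0,1)` entry of `W`. -/
lemma W_expand (u v c : Fin 3 → K) (i : Fin 3) (h : FA K) :
    W K u v c (Xv K i * h) 0 1 = u i * W K u v c h 0 1 + c i * Sc K v h := by
  rw [map_mul, W_Xv, Matrix.mul_apply, Fin.sum_univ_two, (W_tri K u v c h).2.2]
  simp

/-- The `(0,1)` entry of `W u v c` depends linearly on the top-right generator values `c`. -/
lemma W_01_sum (u v c : Fin 3 → K) (h : FA K) :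
    W K u v c h 0 1 = ∑ k : Fin 3, c k * W K u v (Pi.single k 1) h 0 1 := by
  induction h using MonoidAlgebra.induction_on with
  | of g =>
    induction g using FreeMonoid.inductionOn' with
    | one =>
      rw [map_one]
      simp
    | of_mul i t iht =>
      rw [map_mul, of_of]
      generalize (MonoidAlgebra.of K (FreeMonoid (Fin 3))) t = h at iht ⊢
      simp only [W_expand, iht, Finset.mul_sum]
      simp only [Fin.sum_univ_three]
      fin_cases i <;> simp [Pi.single_apply] <;> ring
  | add f g hf hg =>
    simp only [map_add, Matrix.add_apply, hf, hg, ← Finset.sum_add_distrib]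
    exact Finset.sum_congr rfl fun k _ => by ring
  | smul r f hf =>
    simp only [map_smul, Matrix.smul_apply, hf, smul_eq_mul, Finset.mul_sum]
    exact Finset.sum_congr rfl fun k _ => by ring

/-- Algebra maps out of `FA K` agreeing on the three generators are equal. -/
lemma algHom_ext3 {A : Type} [Semiring A] [Algebra K A] (f g : FA K →ₐ[K] A)
    (h : ∀ i, f (Xv K i) = g (Xv K i)) : f = g := by
  refine MonoidAlgebra.algHom_ext ?_ (Subsingleton.elim _ _)
  intro w
  induction w using FreeMonoid.inductionOn' with
  | one =>
    show f ((MonoidAlgebra.of K (FreeMonoid (Fin 3))) 1) = g ((MonoidAlgebra.of K (FreeMonoid (Fin 3))) 1)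
    rw [map_one, map_one, map_one]
  | of_mul i t iht =>
    have iht' : f ((MonoidAlgebra.of K (FreeMonoid (Fin 3))) t)
        = g ((MonoidAlgebra.of K (FreeMonoid (Fin 3))) t) := iht
    show f ((MonoidAlgebra.of K (FreeMonoid (Fin 3))) (FreeMonoid.of i * t))
        = g ((MonoidAlgebra.of K (FreeMonoid (Fin 3))) (FreeMonoid.of i * t))
    rw [map_mul, of_of, map_mul, map_mul, h i, iht']

section Aut
variable (φ : FA K ≃ₐ[K] FA K)

/-- Diagonal data: the "augmentation at `x = y = 0, z = -1`". -/
def vz : Fin 3 → K := fun i => if i = 2 then -1 else 0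

def u1 : Fin 3 → K := fun l => Sc K 0 (φ (Xv K l))

def v1 : Fin 3 → K := fun l => Sc K (vz K) (φ (Xv K l))

/-- The scalar "Jacobian" of `φ`. -/
def Nm : Matrix (Fin 3) (Fin 3) K :=
  fun l j => W K 0 (vz K) (Pi.single j 1) (φ (Xv K l)) 0 1

/-- The scalar "Jacobian" of `φ⁻¹`, twisted by `φ`. -/
def Mm : Matrix (Fin 3) (Fin 3) K :=
  fun i k => W K (u1 K φ) (v1 K φ) (Pi.single k 1) (φ.symm (Xv K i)) 0 1

/-- Chain rule. -/
lemma chain (j : Fin 3) :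
    (W K 0 (vz K) (Pi.single j 1)).comp (φ : FA K →ₐ[K] FA K)
      = W K (u1 K φ) (v1 K φ) (fun l => Nm K φ l j) := by
  apply algHom_ext3
  intro i
  obtain ⟨h10, h00, h11⟩ := W_tri K 0 (vz K) (Pi.single j 1) (φ (Xv K i))
  have lhs : ((W K 0 (vz K) (Pi.single j 1)).comp (φ : FA K →ₐ[K] FA K)) (Xv K i)
      = W K 0 (vz K) (Pi.single j 1) (φ (Xv K i)) := rfl
  rw [lhs, W_Xv, Matrix.eta_fin_two (W K 0 (vz K) (Pi.single j 1) (φ (Xv K i))),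
    h10, h00, h11]
  rfl

/-- The two scalar Jacobians multiply to the identity. -/
lemma MmNm : Mm K φ * Nm K φ = 1 := by
  ext i j
  have h2 : W K 0 (vz K) (Pi.single j 1) (φ (φ.symm (Xv K i)))
      = W K (u1 K φ) (v1 K φ) (fun l => Nm K φ l j) (φ.symm (Xv K i)) :=
    DFunLike.congr_fun (chain K φ j) (φ.symm (Xv K i))
  rw [AlgEquiv.apply_symm_apply] at h2
  have h3 := W_01_sum K (u1 K φ) (v1 K φ) (fun l => Nm K φ l j) (φ.symm (Xv K i))
  rw [← h2, W_Xv] at h3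
  have h4 : ∑ k : Fin 3, Mm K φ i k * Nm K φ k j = (Pi.single j 1 : Fin 3 → K) i := by
    rw [Finset.sum_congr rfl (fun k (_ : k ∈ Finset.univ) => mul_comm (Mm K φ i k) _)]
    exact h3.symm
  rw [Matrix.mul_apply, Matrix.one_apply, h4, Pi.single_apply]

end Aut

/-- The polynomial `f = x + (xz − zy)` is not a `z`-coordinate of `K⟨x,y,z⟩`:
there is no algebra automorphism `φ` of `K⟨x,y,z⟩` with `φ(z) = z` and
`φ(x) = x + xz − zy`. -/
theorem not_z_coordinate_x_add_xz_sub_zy :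
    ¬ ∃ φ : FA K ≃ₐ[K] FA K, φ (Xv K 2) = Xv K 2 ∧
      φ (Xv K 0) = Xv K 0 + Xv K 0 * Xv K 2 - Xv K 2 * Xv K 1 := by
  rintro ⟨φ, -, hx⟩
  have hrow : ∀ j, Nm K φ 0 j = 0 := by
    intro j
    rw [Nm]
    simp only [hx, map_add, map_sub, map_mul, W_Xv]
    fin_cases j <;>
      simp [Matrix.mul_apply, Fin.sum_univ_two, vz, Pi.single_apply]
  have hdet : Matrix.det (Mm K φ) * Matrix.det (Nm K φ) = 1 := by
    rw [← Matrix.det_mul, MmNm, Matrix.det_one]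
  rw [Matrix.det_eq_zero_of_row_eq_zero 0 hrow, mul_zero] at hdet
  exact zero_ne_one hdet
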